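/- arXiv:2509.24058 — 2 statements merged into one kernel-verified Lean document; each statement's English description precedes it below -/
import Mathlib

section
/- Let λ > 0, n fixed, and suppose e^{α_N} ≤ C/N for all large N and some constant C (rare-event intercept bound). Then any maximizer β_N of the penalized objective satisfies ‖β_N‖² ≤ (2/λ)(Ne^{α_N})(1 + n/N), and hence limsup_{N→∞} ‖β_N‖² ≤ 2C/λ < ∞; i.e., the penalized CAV estimators remain bounded as N → ∞. -/
open Real Filter
open scoped RealInnerProductSpace

private lemma hasDerivF (u : ℝ) :
    HasDerivAt (fun u : ℝ => Real.log (1 + Real.exp u)) (Real.exp u / (1 + Real.exp u)) u := by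
  have h1 : HasDerivAt (fun u : ℝ => 1 + Real.exp u) (Real.exp u) u :=
    (Real.hasDerivAt_exp u).const_add 1
  exact h1.log (by positivity)

private lemma convexF : ConvexOn ℝ Set.univ (fun u : ℝ => Real.log (1 + Real.exp u)) := by
  have hd : deriv (fun u : ℝ => Real.log (1 + Real.exp u))
      = fun u => Real.exp u / (1 + Real.exp u) := funext fun u => (hasDerivF u).deriv
  have hd2 : ∀ u : ℝ, HasDerivAt (fun u => Real.exp u / (1 + Real.exp u))
      ((Real.exp u * (1 + Real.exp u) - Real.exp u * Real.exp u) / (1 + Real.exp u) ^ 2) u := by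
    intro u
    exact (Real.hasDerivAt_exp u).div ((Real.hasDerivAt_exp u).const_add 1) (by positivity)
  refine convexOn_univ_of_deriv2_nonneg (fun u => (hasDerivF u).differentiableAt) ?_ ?_
  · rw [hd]; exact fun u => (hd2 u).differentiableAt
  · intro u
    simp only [Function.iterate_succ, Function.iterate_zero, Function.comp_apply, id_eq]
    rw [hd, (hd2 u).deriv]
    have : Real.exp u * (1 + Real.exp u) - Real.exp u * Real.exp u = Real.exp u := by ring
    rw [this]
    positivity

private lemma concaveG :
    ConcaveOn ℝ Set.univ (fun u : ℝ => u - Real.log (1 + Real.exp u)) := by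
  have h1 : ConcaveOn ℝ Set.univ (fun u : ℝ => u) :=
    LinearMap.id.concaveOn convex_univ
  exact h1.sub convexF


/-- Boundedness of penalized CAV estimators: under the rare-event intercept
bound `e^{α_N} ≤ C/N`, any maximizer of the penalized objective satisfies
`‖β_N‖² ≤ (2/λ)(N e^{α_N})(1 + n/N)`, hence `limsup ‖β_N‖² ≤ 2C/λ < ∞`. -/
theorem stmt_12 {d n : ℕ} (lam C : ℝ) (hlam : 0 < lam)
    (x : Fin n → EuclideanSpace ℝ (Fin d))
    (xbar : EuclideanSpace ℝ (Fin d)) (hxbar : xbar = (n : ℝ)⁻¹ • ∑ i, x i)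
    (z : (N : ℕ) → Fin N → EuclideanSpace ℝ (Fin d))
    (σ : ℝ → ℝ) (hσ : σ = fun u => 1 / (1 + exp (-u)))
    (L : (N : ℕ) → ℝ → EuclideanSpace ℝ (Fin d) → ℝ)
    (hLdef : ∀ N α β, L N α β =
      (∑ i, log (σ (α + ⟪β, x i - xbar⟫)))
        + (∑ j, log (1 - σ (α + ⟪β, z N j - xbar⟫)))
        - lam / 2 * ‖β‖ ^ 2)
    (α : ℕ → ℝ)
    (hα : ∀ᶠ N : ℕ in atTop, exp (α N) ≤ C / N)
    (β : ℕ → EuclideanSpace ℝ (Fin d))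
    (hmax : ∀ N, IsMaxOn (fun b => L N (α N) b) Set.univ (β N)) :
    (∀ N : ℕ, 0 < N →
      ‖β N‖ ^ 2 ≤ (2 / lam) * ((N : ℝ) * exp (α N)) * (1 + n / N)) ∧
    Filter.limsup (fun N : ℕ => ‖β N‖ ^ 2) atTop ≤ 2 * C / lam := by
  set F : ℝ → ℝ := fun u => Real.log (1 + Real.exp u) with hF
  have hlogσ : ∀ u : ℝ, Real.log (σ u) = u - F u := by
    intro u
    rw [hσ]
    simp only [one_div]
    rw [Real.log_inv]
    have : (1 : ℝ) + Real.exp (-u) = (1 + Real.exp u) * Real.exp (-u) := by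
      rw [Real.exp_neg]
      have h := (Real.exp_pos u).ne'
      field_simp
      ring
    rw [this, Real.log_mul (by positivity) (by positivity), Real.log_exp, hF]
    ring
  have hlog1σ : ∀ u : ℝ, Real.log (1 - σ u) = -F u := by
    intro u
    rw [hσ]
    have h : (1 : ℝ) - 1 / (1 + Real.exp (-u)) = (1 + Real.exp u)⁻¹ := by
      rw [Real.exp_neg]
      have h1 := (Real.exp_pos u).ne'
      have h2 : (1 : ℝ) + (Real.exp u)⁻¹ ≠ 0 := by
        have : (0:ℝ) < 1 + (Real.exp u)⁻¹ := by positivity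
        exact this.ne'
      field_simp
      ring
    rw [h, Real.log_inv, hF]
  have hFnonneg : ∀ u : ℝ, 0 ≤ F u := by
    intro u
    rw [hF]
    have : (1:ℝ) ≤ 1 + Real.exp u := by linarith [Real.exp_pos u]
    simpa using Real.log_nonneg this
  -- the key bound
  have key : ∀ N : ℕ, lam / 2 * ‖β N‖ ^ 2 ≤ (N : ℝ) * Real.exp (α N) := by
    intro N
    have h0 : L N (α N) 0 ≤ L N (α N) (β N) := hmax N (Set.mem_univ 0)
    rw [hLdef, hLdef] at h0
    simp only [inner_zero_left, add_zero, norm_zero] at h0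
    -- rewrite logs
    set a := α N with ha
    have hL0 : (∑ i : Fin n, Real.log (σ a)) + (∑ j : Fin N, Real.log (1 - σ a))
        - lam / 2 * (0:ℝ) ^ 2
        = (n : ℝ) * Real.log (σ a) + (N : ℝ) * (-F a) := by
      simp [Finset.sum_const, hlog1σ]
    rw [hL0] at h0
    -- Jensen bound on the x-sum
    have hS1 : (∑ i : Fin n, Real.log (σ (a + ⟪β N, x i - xbar⟫)))
        ≤ (n : ℝ) * Real.log (σ a) := by
      rcases Nat.eq_zero_or_pos n with hn | hn
      · subst hn; simp
      · have hn0 : (n : ℝ) ≠ 0 := by positivity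
        -- sum of the inner products is zero
        have hsum0 : (∑ i : Fin n, ⟪β N, x i - xbar⟫) = 0 := by
          rw [← inner_sum]
          have : (∑ i : Fin n, (x i - xbar)) = 0 := by
            rw [Finset.sum_sub_distrib, Finset.sum_const, Finset.card_univ,
              Fintype.card_fin, hxbar, ← Nat.cast_smul_eq_nsmul ℝ, smul_smul,
              mul_inv_cancel₀ hn0, one_smul, sub_self]
          rw [this, inner_zero_right]
        have hJ := concaveG.le_map_sum (t := Finset.univ) (w := fun _ : Fin n => (n : ℝ)⁻¹)
          (p := fun i => a + ⟪β N, x i - xbar⟫)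
          (fun i _ => by positivity)
          (by simp [Finset.sum_const, Finset.card_univ]; field_simp)
          (fun i _ => Set.mem_univ _)
        simp only [smul_eq_mul] at hJ
        have hmid : (∑ i : Fin n, (n : ℝ)⁻¹ * (a + ⟪β N, x i - xbar⟫)) = a := by
          rw [← Finset.mul_sum, Finset.sum_add_distrib, hsum0, add_zero,
            Finset.sum_const, Finset.card_univ, Fintype.card_fin]
          field_simp
          rw [nsmul_eq_mul]
        rw [hmid] at hJ
        rw [← Finset.mul_sum] at hJ
        have := mul_le_mul_of_nonneg_left hJ (le_of_lt (by positivity : (0:ℝ) < (n:ℝ)))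
        rw [← mul_assoc, mul_inv_cancel₀ hn0, one_mul] at this
        calc (∑ i : Fin n, Real.log (σ (a + ⟪β N, x i - xbar⟫)))
            = ∑ i : Fin n, ((a + ⟪β N, x i - xbar⟫) - F (a + ⟪β N, x i - xbar⟫)) := by
              simp [hlogσ]
          _ ≤ (n : ℝ) * (a - F a) := this
          _ = (n : ℝ) * Real.log (σ a) := by rw [hlogσ]
    have hS2 : (∑ j : Fin N, Real.log (1 - σ (a + ⟪β N, z N j - xbar⟫))) ≤ 0 := by
      apply Finset.sum_nonpos
      intro j _
      rw [hlog1σ]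
      simpa using hFnonneg _
    have hFa : F a ≤ Real.exp a := by
      have := Real.log_le_sub_one_of_pos (show (0:ℝ) < 1 + Real.exp a by positivity)
      rw [hF]; linarith
    have hNF : (N : ℝ) * F a ≤ (N : ℝ) * Real.exp a :=
      mul_le_mul_of_nonneg_left hFa (Nat.cast_nonneg N)
    nlinarith [hFnonneg a]
  constructor
  · intro N hN
    have hk := key N
    have he : (0:ℝ) ≤ (N : ℝ) * Real.exp (α N) := by positivity
    have h1 : (1:ℝ) ≤ 1 + (n : ℝ) / N := by
      have : (0:ℝ) ≤ (n:ℝ) / N := by positivity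
      linarith
    have h2 : ‖β N‖ ^ 2 ≤ (2 / lam) * ((N : ℝ) * Real.exp (α N)) := by
      rw [div_mul_eq_mul_div, le_div_iff₀ hlam]
      nlinarith
    calc ‖β N‖ ^ 2 ≤ (2 / lam) * ((N : ℝ) * Real.exp (α N)) := h2
      _ ≤ (2 / lam) * ((N : ℝ) * Real.exp (α N)) * (1 + (n:ℝ) / N) := by
          nlinarith [div_pos (show (0:ℝ) < 2 by norm_num) hlam]
  · apply Filter.limsup_le_of_le
    · exact Filter.isCoboundedUnder_le_of_le atTop (x := 0) fun N => sq_nonneg ‖β N‖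
    · filter_upwards [hα, eventually_ge_atTop 1] with N hN hN1
      have hNpos : (0:ℝ) < N := by exact_mod_cast hN1
      have hk := key N
      have : (N : ℝ) * Real.exp (α N) ≤ C := by
        calc (N : ℝ) * Real.exp (α N) ≤ (N : ℝ) * (C / N) :=
          mul_le_mul_of_nonneg_left hN (le_of_lt hNpos)
          _ = C := by field_simp
      rw [show (2:ℝ) * C / lam = 2 * C / lam from rfl, le_div_iff₀ hlam]
      nlinarith
end

section
/- Let Z be an R^d-valued random variable with distribution F_0 satisfying E[‖Z‖ e^{Zᵀβ_0}] < ∞, let x̄ ∈ R^d, α_N ∈ R with A_0 = lim N e^{α_N} ∈ (0, ∞), and suppose the limiting moment identity ∫ (z - x̄) e^{zᵀβ_0} dF_0(z) = -(λ e^{x̄ᵀβ_0}/A_0) β_0 holds. Define ρ(z) = -e^{α_N - β_0ᵀx̄}(z - x̄)e^{zᵀβ_0}. Then E[ρ(Z)] = (λ e^{α_N}/A_0) β_0, and therefore √N · E[ρ(Z)] - λβ_0/√N → 0 as N → ∞. -/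
open Real MeasureTheory Filter
open scoped RealInnerProductSpace

/-- The penalty-induced mean of the linearized score: under the limiting
moment identity, `E[ρ(Z)] = (λ e^{α_N}/A₀) β₀`, and
`√N · E[ρ(Z)] - λβ₀/√N → 0`. -/
theorem stmt_13 {d : ℕ} (F0 : Measure (EuclideanSpace ℝ (Fin d)))
    [IsProbabilityMeasure F0]
    (β0 xbar : EuclideanSpace ℝ (Fin d)) (lam A0 : ℝ) (hA0 : 0 < A0)
    (α : ℕ → ℝ)
    (hA : Tendsto (fun N : ℕ => (N : ℝ) * exp (α N)) atTop (nhds A0))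
    (hint : Integrable (fun z : EuclideanSpace ℝ (Fin d) =>
      ‖z‖ * exp ⟪z, β0⟫) F0)
    (hmoment : (∫ z, exp ⟪z, β0⟫ • (z - xbar) ∂F0)
      = (-(lam * exp ⟪xbar, β0⟫ / A0)) • β0)
    (ρ : ℕ → EuclideanSpace ℝ (Fin d) → EuclideanSpace ℝ (Fin d))
    (hρ : ∀ N z, ρ N z = (-(exp (α N - ⟪xbar, β0⟫) * exp ⟪z, β0⟫)) • (z - xbar)) :
    (∀ N : ℕ, (∫ z, ρ N z ∂F0) = (lam * exp (α N) / A0) • β0) ∧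
    Tendsto (fun N : ℕ =>
        Real.sqrt N • (∫ z, ρ N z ∂F0) - (lam / Real.sqrt N) • β0)
      atTop (nhds 0) := by
  have key : ∀ N : ℕ, (∫ z, ρ N z ∂F0) = (lam * exp (α N) / A0) • β0 := by
    intro N
    have heq : (fun z => ρ N z)
        = fun z => (-(exp (α N - ⟪xbar, β0⟫))) • (exp ⟪z, β0⟫ • (z - xbar)) := by
      funext z
      rw [hρ, smul_smul, neg_mul]
    rw [heq, integral_smul, hmoment, smul_smul]
    congr 1
    rw [exp_sub]
    field_simp
  refine ⟨key, ?_⟩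
  have hsqrt : Tendsto (fun N : ℕ => (1 : ℝ) / Real.sqrt N) atTop (nhds 0) := by
    have h1 : Tendsto (fun N : ℕ => Real.sqrt N) atTop atTop := by
      refine tendsto_atTop_atTop.mpr fun b => ⟨⌈b^2⌉₊, fun n hn => ?_⟩
      exact Real.le_sqrt_of_sq_le ((Nat.le_ceil _).trans (by exact_mod_cast hn))
    simpa [one_div, Pi.inv_def] using h1.inv_tendsto_atTop
  have h2 : Tendsto (fun N : ℕ => Real.sqrt N * exp (α N)) atTop (nhds 0) := by
    have h3 : Tendsto (fun N : ℕ => ((N : ℝ) * exp (α N)) * (1 / Real.sqrt N))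
        atTop (nhds (A0 * 0)) := hA.mul hsqrt
    rw [mul_zero] at h3
    refine h3.congr' ?_
    filter_upwards [eventually_ge_atTop 1] with N hN
    have hNpos : (0 : ℝ) < Real.sqrt N := Real.sqrt_pos.mpr (by positivity)
    have : (N : ℝ) = Real.sqrt N * Real.sqrt N :=
      (Real.mul_self_sqrt (Nat.cast_nonneg N)).symm
    nth_rewrite 1 [this]
    rw [mul_one_div, mul_assoc, mul_div_cancel_left₀ _ hNpos.ne']
  have hc : Tendsto (fun N : ℕ =>
      Real.sqrt N * (lam * exp (α N) / A0) - lam / Real.sqrt N) atTop (nhds 0) := by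
    have ha : Tendsto (fun N : ℕ => Real.sqrt N * (lam * exp (α N) / A0))
        atTop (nhds 0) := by
      have := (h2.const_mul (lam / A0))
      rw [mul_zero] at this
      refine this.congr fun N => by ring
    have hb : Tendsto (fun N : ℕ => lam / Real.sqrt N) atTop (nhds 0) := by
      have := hsqrt.const_mul lam
      rw [mul_zero] at this
      refine this.congr fun N => by ring
    simpa using ha.sub hb
  have := hc.smul_const β0
  rw [zero_smul] at this
  refine this.congr fun N => ?_
  rw [key N, smul_smul, ← sub_smul]
end
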